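/- Let E be a measurable space, let P and P' be Markov kernels on E with invariant probability measures π and π' respectively (i.e. πP = π and π'P' = π'). Suppose there exist η ∈ (0,1) and ε ≥ 0 such that ‖ν_1 P − ν_2 P‖_TV ≤ η ‖ν_1 − ν_2‖_TV for all probability measures ν_1, ν_2 on E, and sup_{x ∈ E} ‖P(x, ·) − P'(x, ·)‖_TV ≤ ε. Then ‖π − π'‖_TV ≤ ε/(1 − η). -/

import Mathlib

open MeasureTheory ProbabilityTheory

/-- Total variation distance between two measures:
`tvDist μ ν = sup { |μ(s) − ν(s)| : s measurable }`. (For probability measures this is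
one half of the total variation norm of `μ − ν`; the statement below is invariant under
this choice of normalisation.) -/
noncomputable def tvDist {E : Type*} [MeasurableSpace E] (μ ν : Measure E) : ENNReal :=
  ⨆ (s : Set E) (_ : MeasurableSet s), (μ s - ν s) + (ν s - μ s)

lemma tvDist_le_of {E : Type*} [MeasurableSpace E] {μ ν : Measure E} {c : ENNReal}
    (h : ∀ s : Set E, MeasurableSet s → (μ s - ν s) + (ν s - μ s) ≤ c) : tvDist μ ν ≤ c :=
  iSup₂_le h

lemma le_tvDist {E : Type*} [MeasurableSpace E] (μ ν : Measure E) {s : Set E}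
    (hs : MeasurableSet s) : (μ s - ν s) + (ν s - μ s) ≤ tvDist μ ν :=
  le_iSup₂ (f := fun s (_ : MeasurableSet s) => (μ s - ν s) + (ν s - μ s)) s hs

lemma tvDist_triangle {E : Type*} [MeasurableSpace E] (μ ρ ν : Measure E) :
    tvDist μ ν ≤ tvDist μ ρ + tvDist ρ ν := by
  refine tvDist_le_of fun s hs => ?_
  have h1 : μ s - ν s ≤ (μ s - ρ s) + (ρ s - ν s) := by
    rw [tsub_le_iff_right]
    calc μ s ≤ (μ s - ρ s) + ρ s := le_tsub_add
      _ ≤ (μ s - ρ s) + ((ρ s - ν s) + ν s) := by gcongr; exact le_tsub_add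
      _ = (μ s - ρ s) + (ρ s - ν s) + ν s := by ring
  have h2 : ν s - μ s ≤ (ν s - ρ s) + (ρ s - μ s) := by
    rw [tsub_le_iff_right]
    calc ν s ≤ (ν s - ρ s) + ρ s := le_tsub_add
      _ ≤ (ν s - ρ s) + ((ρ s - μ s) + μ s) := by gcongr; exact le_tsub_add
      _ = (ν s - ρ s) + (ρ s - μ s) + μ s := by ring
  calc (μ s - ν s) + (ν s - μ s)
      ≤ ((μ s - ρ s) + (ρ s - ν s)) + ((ν s - ρ s) + (ρ s - μ s)) := add_le_add h1 h2
    _ = ((μ s - ρ s) + (ρ s - μ s)) + ((ρ s - ν s) + (ν s - ρ s)) := by ring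
    _ ≤ tvDist μ ρ + tvDist ρ ν := add_le_add (le_tvDist _ _ hs) (le_tvDist _ _ hs)

/-- If `P` satisfies a total-variation contraction with constant `η ∈ (0,1)`,
`P'` is uniformly `ε`-close to `P` in total variation, and `π`, `π'` are invariant probability
measures of `P`, `P'` respectively, then `‖π − π'‖_TV ≤ ε/(1 − η)`. -/
theorem invariant_measure_stability {E : Type*} [MeasurableSpace E]
    (P P' : Kernel E E) [IsMarkovKernel P] [IsMarkovKernel P']
    (π π' : Measure E) [IsProbabilityMeasure π] [IsProbabilityMeasure π']
    (hπ : π.bind (fun x => P x) = π) (hπ' : π'.bind (fun x => P' x) = π')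
    (η ε : ENNReal) (hη₀ : 0 < η) (hη₁ : η < 1)
    (hcontr : ∀ ν₁ ν₂ : Measure E, IsProbabilityMeasure ν₁ → IsProbabilityMeasure ν₂ →
      tvDist (ν₁.bind fun x => P x) (ν₂.bind fun x => P x) ≤ η * tvDist ν₁ ν₂)
    (hclose : ∀ x : E, tvDist (P x) (P' x) ≤ ε) :
    tvDist π π' ≤ ε / (1 - η) := by
  set t := tvDist π π' with ht
  -- t is finite
  have ht2 : t ≤ 2 := by
    refine tvDist_le_of fun s hs => ?_
    have h1 : π s - π' s ≤ 1 := le_trans (tsub_le_self.trans (prob_le_one)) le_rfl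
    have h2 : π' s - π s ≤ 1 := le_trans (tsub_le_self.trans (prob_le_one)) le_rfl
    calc (π s - π' s) + (π' s - π s) ≤ 1 + 1 := add_le_add h1 h2
      _ = 2 := by norm_num
  have htfin : t ≠ ⊤ := fun h => by simp [h] at ht2
  -- closeness of binds
  have hbind : tvDist (π'.bind fun x => P x) (π'.bind fun x => P' x) ≤ ε := by
    refine tvDist_le_of fun s hs => ?_
    have hb1 : (π'.bind fun x => P x) s = ∫⁻ x, P x s ∂π' :=
      Measure.bind_apply hs P.measurable.aemeasurable
    have hb2 : (π'.bind fun x => P' x) s = ∫⁻ x, P' x s ∂π' :=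
      Measure.bind_apply hs P'.measurable.aemeasurable
    have hmf : Measurable fun x => P x s := P.measurable_coe hs
    have hmg : Measurable fun x => P' x s := P'.measurable_coe hs
    have key1 : (∫⁻ x, P x s ∂π') - (∫⁻ x, P' x s ∂π') ≤ ∫⁻ x, P x s - P' x s ∂π' := by
      rw [tsub_le_iff_right, ← lintegral_add_left (f := fun x => P x s - P' x s) (hmf.sub hmg)]
      exact lintegral_mono fun x => le_tsub_add
    have key2 : (∫⁻ x, P' x s ∂π') - (∫⁻ x, P x s ∂π') ≤ ∫⁻ x, P' x s - P x s ∂π' := by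
      rw [tsub_le_iff_right, ← lintegral_add_left (f := fun x => P' x s - P x s) (hmg.sub hmf)]
      exact lintegral_mono fun x => le_tsub_add
    calc ((π'.bind fun x => P x) s - (π'.bind fun x => P' x) s)
          + ((π'.bind fun x => P' x) s - (π'.bind fun x => P x) s)
        ≤ (∫⁻ x, P x s - P' x s ∂π') + (∫⁻ x, P' x s - P x s ∂π') := by
          rw [hb1, hb2]; exact add_le_add key1 key2
      _ = ∫⁻ x, (P x s - P' x s) + (P' x s - P x s) ∂π' :=
          (lintegral_add_left (μ := π') (f := fun x => P x s - P' x s) (hmf.sub hmg) _).symm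
      _ ≤ ∫⁻ _, ε ∂π' := lintegral_mono fun x =>
          le_trans (le_tvDist (P x) (P' x) hs) (hclose x)
      _ = ε := by simp
  -- main inequality
  have hmain : t ≤ η * t + ε := by
    calc t = tvDist (π.bind fun x => P x) (π'.bind fun x => P' x) := by rw [hπ, hπ']
      _ ≤ tvDist (π.bind fun x => P x) (π'.bind fun x => P x)
          + tvDist (π'.bind fun x => P x) (π'.bind fun x => P' x) := tvDist_triangle _ _ _
      _ ≤ η * t + ε := add_le_add (hcontr π π' inferInstance inferInstance) hbind
  -- solve
  rw [ENNReal.le_div_iff_mul_le (Or.inl (by simpa [tsub_eq_zero_iff_le] using not_le_of_gt hη₁))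
    (Or.inl (by simp))]
  have : t * (1 - η) = t - η * t := by
    rw [ENNReal.mul_sub (fun _ _ => htfin), mul_one, mul_comm]
  rw [this, tsub_le_iff_right, add_comm]
  exact hmain
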